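/- Let U, V, U₊, V₊, U₋, V₋ be positive definite d×d matrices with V₊^{1/2} U₊ V₊^{1/2} ≤ X·I, V₋^{1/2} U₋ V₋^{1/2} ≤ X·I, V^{1/2} U V^{1/2} ≤ X·I, and U = (U₊+U₋)/2, V = (V₊+V₋)/2. Then for every θ ∈ [0,1], the convex combination Uθ = θU₊ + (1−θ)U₋ and Vθ = θV₊ + (1−θ)V₋ satisfies Vθ^{1/2} Uθ Vθ^{1/2} ≤ 4X·I. -/

import Mathlib

open scoped ComplexOrder Matrix

/-- The positive semidefinite square root of a positive semidefinite matrix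
(the definition removed from Mathlib, restored with its old meaning). -/
noncomputable def Matrix.PosSemidef.sqrt {n 𝕜 : Type*} [Fintype n] [DecidableEq n] [RCLike 𝕜]
    {A : Matrix n n 𝕜} (hA : A.PosSemidef) : Matrix n n 𝕜 :=
  hA.1.eigenvectorUnitary.1 * Matrix.diagonal ((↑) ∘ (√·) ∘ hA.1.eigenvalues) *
    (star hA.1.eigenvectorUnitary : Matrix n n 𝕜)

lemma psd_sqrt_psd {n : Type*} [Fintype n] [DecidableEq n] {A : Matrix n n ℂ}
    (hA : A.PosSemidef) : hA.sqrt.PosSemidef := by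
  unfold Matrix.PosSemidef.sqrt
  have hD : (Matrix.diagonal ((↑) ∘ (√·) ∘ hA.1.eigenvalues : n → ℂ)).PosSemidef :=
    Matrix.PosSemidef.diagonal (fun i => Complex.zero_le_real.2 (Real.sqrt_nonneg _))
  have := hD.mul_mul_conjTranspose_same (hA.1.eigenvectorUnitary : Matrix n n ℂ)
  simpa [Matrix.star_eq_conjTranspose] using this

lemma psd_sqrt_mul_self {n : Type*} [Fintype n] [DecidableEq n] {A : Matrix n n ℂ}
    (hA : A.PosSemidef) : hA.sqrt * hA.sqrt = A := by
  unfold Matrix.PosSemidef.sqrt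
  have hU : (star hA.1.eigenvectorUnitary : Matrix n n ℂ) * hA.1.eigenvectorUnitary = 1 :=
    Unitary.star_mul_self_of_mem hA.1.eigenvectorUnitary.2
  have hDD : Matrix.diagonal ((↑) ∘ (√·) ∘ hA.1.eigenvalues : n → ℂ) *
      Matrix.diagonal ((↑) ∘ (√·) ∘ hA.1.eigenvalues : n → ℂ) =
      Matrix.diagonal (RCLike.ofReal ∘ hA.1.eigenvalues) := by
    rw [Matrix.diagonal_mul_diagonal]
    congr 1
    funext i
    simp only [Function.comp]
    rw [← Complex.ofReal_mul, Real.mul_self_sqrt (hA.eigenvalues_nonneg i)]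
    rfl
  conv_rhs => rw [hA.1.spectral_theorem, Unitary.conjStarAlgAut_apply]
  rw [← hDD]
  calc _ = (hA.1.eigenvectorUnitary : Matrix n n ℂ) *
        Matrix.diagonal ((↑) ∘ (√·) ∘ hA.1.eigenvalues : n → ℂ) *
        ((star hA.1.eigenvectorUnitary : Matrix n n ℂ) * hA.1.eigenvectorUnitary) *
        Matrix.diagonal ((↑) ∘ (√·) ∘ hA.1.eigenvalues : n → ℂ) *
        (star hA.1.eigenvectorUnitary : Matrix n n ℂ) := by noncomm_ring
    _ = _ := by rw [hU]; noncomm_ring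

section helpers

lemma psd_smul_aux {n : Type*} [Fintype n] (r : ℝ) (hr : 0 ≤ r)
    {M : Matrix n n ℂ} (hM : M.PosSemidef) : ((r : ℂ) • M).PosSemidef := by
  apply Matrix.PosSemidef.of_dotProduct_mulVec_nonneg
  · have h1 := hM.1
    unfold Matrix.IsHermitian at h1 ⊢
    rw [Matrix.conjTranspose_smul, h1, Complex.star_def, Complex.conj_ofReal]
  · intro x
    rw [Matrix.smul_mulVec, dotProduct_smul, smul_eq_mul]
    exact mul_nonneg (Complex.zero_le_real.2 hr) (hM.dotProduct_mulVec_nonneg x)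

lemma psd_sub_conj {n : Type*} [Fintype n] {M N : Matrix n n ℂ}
    (h : (N - M).PosSemidef) (B : Matrix n n ℂ) :
    (Bᴴ * N * B - Bᴴ * M * B).PosSemidef := by
  have h2 := h.conjTranspose_mul_mul_same B
  have : Bᴴ * (N - M) * B = Bᴴ * N * B - Bᴴ * M * B := by
    rw [Matrix.mul_sub, Matrix.sub_mul]
  rwa [this] at h2

end helpers

noncomputable def eqv {n : Type*} [Fintype n] : (n → ℂ) → EuclideanSpace ℂ n :=
  (WithLp.equiv 2 _).symm

lemma dot_eq_inner {n : Type*} [Fintype n] (v w : n → ℂ) :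
    dotProduct (star v) w = inner ℂ (eqv v) (eqv w) := by
  rw [dotProduct_comm]; rfl

lemma dot_self_eq {n : Type*} [Fintype n] (v : n → ℂ) :
    dotProduct (star v) v = ((‖eqv v‖ ^ 2 : ℝ) : ℂ) := by
  rw [dot_eq_inner, inner_self_eq_norm_sq_to_K]
  norm_cast

lemma dot_cts {n : Type*} [Fintype n] (A : Matrix n n ℂ) (v : n → ℂ) :
    dotProduct (star v) ((Aᴴ * A) *ᵥ v) = ((‖eqv (A *ᵥ v)‖ ^ 2 : ℝ) : ℂ) := by
  rw [← Matrix.mulVec_mulVec, Matrix.dotProduct_mulVec, ← Matrix.star_mulVec,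
    dot_self_eq]

lemma key_flip {n : Type*} [Fintype n] [DecidableEq n] {c : ℝ} (hc : 0 ≤ c) (A : Matrix n n ℂ)
    (h : ((c : ℂ) • (1 : Matrix n n ℂ) - Aᴴ * A).PosSemidef) :
    ((c : ℂ) • (1 : Matrix n n ℂ) - A * Aᴴ).PosSemidef := by
  have hbound : ∀ v : n → ℂ, ‖eqv (A *ᵥ v)‖ ^ 2 ≤ c * ‖eqv v‖ ^ 2 := by
    intro v
    have h2 := h.dotProduct_mulVec_nonneg v
    rw [Matrix.sub_mulVec, dotProduct_sub, sub_nonneg, Matrix.smul_mulVec,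
      Matrix.one_mulVec, dotProduct_smul, smul_eq_mul, dot_cts, dot_self_eq,
      ← Complex.ofReal_mul, Complex.real_le_real] at h2
    exact h2
  have hmain : ∀ x : n → ℂ, ‖eqv (Aᴴ *ᵥ x)‖ ^ 2 ≤ c * ‖eqv x‖ ^ 2 := by
    intro x
    set y := Aᴴ *ᵥ x with hy
    have e1 : ((‖eqv y‖ ^ 2 : ℝ) : ℂ) = inner ℂ (eqv x) (eqv (A *ᵥ y)) := by
      rw [← dot_eq_inner, ← dot_self_eq, hy, Matrix.star_mulVec,
        Matrix.conjTranspose_conjTranspose, ← Matrix.dotProduct_mulVec]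
    have e2 : ‖eqv y‖ ^ 2 ≤ ‖eqv x‖ * ‖eqv (A *ᵥ y)‖ := by
      calc ‖eqv y‖ ^ 2 = ((‖eqv y‖ ^ 2 : ℝ) : ℂ).re := (Complex.ofReal_re _).symm
        _ = (inner ℂ (eqv x) (eqv (A *ᵥ y)) : ℂ).re := by rw [e1]
        _ ≤ ‖(inner ℂ (eqv x) (eqv (A *ᵥ y)) : ℂ)‖ := Complex.re_le_norm _
        _ ≤ ‖eqv x‖ * ‖eqv (A *ᵥ y)‖ := norm_inner_le_norm _ _
    have e3 := hbound y
    have h0 : 0 ≤ ‖eqv y‖ := norm_nonneg _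
    have h1 : 0 ≤ ‖eqv x‖ := norm_nonneg _
    have h4 : 0 ≤ ‖eqv (A *ᵥ y)‖ := norm_nonneg _
    rcases eq_or_lt_of_le h0 with h5 | h5
    · nlinarith
    · have e4 : ‖eqv y‖ ^ 2 * ‖eqv y‖ ^ 2 ≤ (‖eqv x‖ * ‖eqv (A *ᵥ y)‖) * (‖eqv x‖ * ‖eqv (A *ᵥ y)‖) :=
        mul_le_mul e2 e2 (by positivity) (by positivity)
      have e5 : ‖eqv x‖ ^ 2 * ‖eqv (A *ᵥ y)‖ ^ 2 ≤ ‖eqv x‖ ^ 2 * (c * ‖eqv y‖ ^ 2) :=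
        mul_le_mul_of_nonneg_left e3 (sq_nonneg _)
      nlinarith [mul_pos h5 h5]
  apply Matrix.PosSemidef.of_dotProduct_mulVec_nonneg
  · have h1 : Aᴴᴴ = A := Matrix.conjTranspose_conjTranspose A
    unfold Matrix.IsHermitian
    rw [Matrix.conjTranspose_sub, Matrix.conjTranspose_smul, Matrix.conjTranspose_one,
      Matrix.conjTranspose_mul, h1, Complex.star_def, Complex.conj_ofReal]
  · intro x
    have hAA : (A * Aᴴ) = (Aᴴ)ᴴ * Aᴴ := by rw [Matrix.conjTranspose_conjTranspose]
    rw [Matrix.sub_mulVec, dotProduct_sub, Matrix.smul_mulVec,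
      Matrix.one_mulVec, dotProduct_smul, smul_eq_mul, hAA, dot_cts, dot_self_eq,
      ← Complex.ofReal_mul, ← Complex.ofReal_sub, Complex.zero_le_real, sub_nonneg]
    exact hmain x


theorem stmt_11 {d : ℕ} (X : ℝ) (hX : 1 ≤ X)
    (U V Up Vp Um Vm : Matrix (Fin d) (Fin d) ℂ)
    (hU : U.PosDef) (hV : V.PosDef) (hUp : Up.PosDef) (hVp : Vp.PosDef)
    (hUm : Um.PosDef) (hVm : Vm.PosDef)
    (hmidU : U = (1 / 2 : ℂ) • (Up + Um)) (hmidV : V = (1 / 2 : ℂ) • (Vp + Vm))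
    (hp : ((X : ℂ) • (1 : Matrix (Fin d) (Fin d) ℂ) -
        hVp.posSemidef.sqrt * Up * hVp.posSemidef.sqrt).PosSemidef)
    (hm : ((X : ℂ) • (1 : Matrix (Fin d) (Fin d) ℂ) -
        hVm.posSemidef.sqrt * Um * hVm.posSemidef.sqrt).PosSemidef)
    (h : ((X : ℂ) • (1 : Matrix (Fin d) (Fin d) ℂ) -
        hV.posSemidef.sqrt * U * hV.posSemidef.sqrt).PosSemidef) :
    ∀ θ : ℝ, 0 ≤ θ → θ ≤ 1 →
      ∀ S : Matrix (Fin d) (Fin d) ℂ, S.PosSemidef →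
        S * S = (θ : ℂ) • Vp + ((1 - θ : ℝ) : ℂ) • Vm →
        (((4 * X : ℝ) : ℂ) • (1 : Matrix (Fin d) (Fin d) ℂ) -
          S * ((θ : ℂ) • Up + ((1 - θ : ℝ) : ℂ) • Um) * S).PosSemidef := by
  intro θ hθ0 hθ1 S hS hSS
  set W : Matrix (Fin d) (Fin d) ℂ := (θ : ℂ) • Up + ((1 - θ : ℝ) : ℂ) • Um with hW
  set T := hV.posSemidef.sqrt with hT
  have hTpsd : T.PosSemidef := psd_sqrt_psd hV.posSemidef
  have hTsq : T * T = V := psd_sqrt_mul_self hV.posSemidef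
  have hXpos : (0:ℝ) < X := lt_of_lt_of_le one_pos hX
  -- T invertible
  have hdet : IsUnit T.det := by
    have hVdet : V.det ≠ 0 := hV.det_pos.ne'
    have hmul : T.det * T.det = V.det := by rw [← Matrix.det_mul, hTsq]
    refine isUnit_iff_ne_zero.2 fun h0 => hVdet ?_
    rw [← hmul, h0, mul_zero]
  have hinv1 : T⁻¹ * T = 1 := Matrix.nonsing_inv_mul _ hdet
  have hinv2 : T * T⁻¹ = 1 := Matrix.mul_nonsing_inv _ hdet
  have hTH : Tᴴ = T := hTpsd.1
  have hinvH : (T⁻¹)ᴴ = T⁻¹ := by rw [Matrix.conjTranspose_nonsing_inv, hTH]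
  have hVinv : V⁻¹ = T⁻¹ * T⁻¹ := by rw [← hTsq, Matrix.mul_inv_rev]
  have hSH : Sᴴ = S := hS.1
  -- Step C : X • V⁻¹ - U is psd
  have hC : ((X : ℂ) • V⁻¹ - U).PosSemidef := by
    have h2 := psd_sub_conj h T⁻¹
    rw [hinvH] at h2
    have e1 : T⁻¹ * ((X : ℂ) • (1 : Matrix (Fin d) (Fin d) ℂ)) * T⁻¹ = (X : ℂ) • V⁻¹ := by
      rw [Matrix.mul_smul, Matrix.mul_one, Matrix.smul_mul, hVinv]
    have e2 : T⁻¹ * (T * U * T) * T⁻¹ = U := by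
      rw [← Matrix.mul_assoc, ← Matrix.mul_assoc, hinv1, Matrix.one_mul,
        Matrix.mul_assoc, hinv2, Matrix.mul_one]
    rwa [e1, e2] at h2
  -- Step A : 2U - W psd
  have hA2 : ((2 : ℂ) • U - W).PosSemidef := by
    have heq : (2 : ℂ) • U - W = ((1 - θ : ℝ) : ℂ) • Up + (θ : ℂ) • Um := by
      rw [hmidU, hW]
      push_cast
      module
    rw [heq]
    exact (psd_smul_aux (1 - θ) (by linarith) hUp.posSemidef).add
      (psd_smul_aux θ hθ0 hUm.posSemidef)
  -- Step B : 2V - S*S psd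
  have hB2 : ((2 : ℂ) • V - S * S).PosSemidef := by
    have heq : (2 : ℂ) • V - S * S = ((1 - θ : ℝ) : ℂ) • Vp + (θ : ℂ) • Vm := by
      rw [hmidV, hSS]
      push_cast
      module
    rw [heq]
    exact (psd_smul_aux (1 - θ) (by linarith) hVp.posSemidef).add
      (psd_smul_aux θ hθ0 hVm.posSemidef)
  -- Step D : (2X) • V⁻¹ - W psd
  have hD : (((2 * X : ℝ) : ℂ) • V⁻¹ - W).PosSemidef := by
    have h1 := psd_smul_aux 2 (by norm_num) hC
    have h2 := h1.add hA2
    have heq : ((2 : ℝ) : ℂ) • ((X : ℂ) • V⁻¹ - U) + ((2 : ℂ) • U - W)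
        = ((2 * X : ℝ) : ℂ) • V⁻¹ - W := by
      push_cast
      module
    rwa [heq] at h2
  -- Step E : conjugate by S
  have hE : (((2 * X : ℝ) : ℂ) • (S * V⁻¹ * S) - S * W * S).PosSemidef := by
    have h2 := psd_sub_conj hD S
    rw [hSH] at h2
    have e1 : S * (((2 * X : ℝ) : ℂ) • V⁻¹) * S = ((2 * X : ℝ) : ℂ) • (S * V⁻¹ * S) := by
      rw [Matrix.mul_smul, Matrix.smul_mul]
    rwa [e1] at h2
  -- Step F : 2•1 - S V⁻¹ S psd
  have hF : ((2 : ℂ) • (1 : Matrix (Fin d) (Fin d) ℂ) - S * V⁻¹ * S).PosSemidef := by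
    have h2 := psd_sub_conj hB2 T⁻¹
    rw [hinvH] at h2
    have e1 : T⁻¹ * ((2 : ℂ) • V) * T⁻¹ = (2 : ℂ) • (1 : Matrix (Fin d) (Fin d) ℂ) := by
      rw [Matrix.mul_smul, Matrix.smul_mul, ← hTsq, ← Matrix.mul_assoc,
        hinv1, Matrix.one_mul, hinv2]
    rw [e1] at h2
    -- h2 : (2•1 - T⁻¹ * (S*S) * T⁻¹).PosSemidef ; note T⁻¹*(S*S)*T⁻¹ = A * Aᴴ with A = T⁻¹ * S
    have hAH : (T⁻¹ * S)ᴴ = S * T⁻¹ := by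
      rw [Matrix.conjTranspose_mul, hSH, hinvH]
    have hAAH : (T⁻¹ * S) * (T⁻¹ * S)ᴴ = T⁻¹ * (S * S) * T⁻¹ := by
      rw [hAH]
      noncomm_ring
    have h3 : (((2 : ℝ) : ℂ) • (1 : Matrix (Fin d) (Fin d) ℂ)
        - (T⁻¹ * S) * (T⁻¹ * S)ᴴ).PosSemidef := by
      rw [hAAH]
      push_cast
      exact h2
    have h4 := key_flip (by norm_num : (0:ℝ) ≤ 2) (T⁻¹ * S)ᴴ (by
      rwa [Matrix.conjTranspose_conjTranspose])
    rw [Matrix.conjTranspose_conjTranspose] at h4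
    have hATA : (T⁻¹ * S)ᴴ * (T⁻¹ * S) = S * V⁻¹ * S := by
      rw [hAH, hVinv]
      noncomm_ring
    rw [hATA] at h4
    push_cast at h4
    exact h4
  -- conclusion
  have h1 := psd_smul_aux (2 * X) (by positivity) hF
  have h2 := h1.add hE
  have heq : ((2 * X : ℝ) : ℂ) • ((2 : ℂ) • (1 : Matrix (Fin d) (Fin d) ℂ) - S * V⁻¹ * S)
      + (((2 * X : ℝ) : ℂ) • (S * V⁻¹ * S) - S * W * S)
      = ((4 * X : ℝ) : ℂ) • (1 : Matrix (Fin d) (Fin d) ℂ) - S * W * S := by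
    push_cast
    module
  rwa [heq] at h2
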